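/- arXiv:2603.20281 — 2 statements merged into one kernel-verified Lean document; each statement's English description precedes it below -/
import Mathlib

section
/- In the linear Bertrand duopoly, the grim-trigger patience threshold δ̄(p^c) = (π(p*,p^c) - π(p^c,p^c))/(π(p*,p^c) - π(p*,p*)) admits the closed form δ̄(p^c) = 1 - [a + (b-d)c - (b-d)(p^c + p*)] / ((p* - c) d). -/
/-- Closed form of the grim-trigger patience threshold in the linear Bertrand duopoly:
`δ̄(p^c) = 1 - [a + (b-d)c - (b-d)(p^c + p*)] / ((p* - c) d)`. -/
theorem threshold_closed_form (a b c d pc : ℝ)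
    (ha : a > c * (b - d)) (hc : c < a / b) (hbd : b > d) (hd : d > 0) (hc0 : c > 0)
    (hpc1 : (a + b * c) / (2 * b - d) < pc)
    (hpc2 : pc ≤ (a + (b - d) * c) / (2 * (b - d))) :
    ((((a + b * c) / (2 * b - d)) - c) * (a - b * ((a + b * c) / (2 * b - d)) + d * pc) -
        (pc - c) * (a - b * pc + d * pc)) /
      ((((a + b * c) / (2 * b - d)) - c) * (a - b * ((a + b * c) / (2 * b - d)) + d * pc) -
        (((a + b * c) / (2 * b - d)) - c) *
          (a - b * ((a + b * c) / (2 * b - d)) + d * ((a + b * c) / (2 * b - d)))) =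
      1 - (a + (b - d) * c - (b - d) * (pc + (a + b * c) / (2 * b - d))) /
        ((((a + b * c) / (2 * b - d)) - c) * d) := by
  set P := (a + b * c) / (2 * b - d) with hPdef
  have h2 : (0:ℝ) < 2 * b - d := by linarith
  have hPc : 0 < P - c := by
    have : c < P := by
      rw [hPdef, lt_div_iff₀ h2]
      nlinarith
    linarith
  have hpcP : 0 < pc - P := by linarith
  have hden : (P - c) * (a - b * P + d * pc) - (P - c) * (a - b * P + d * P) ≠ 0 := by
    have heq : (P - c) * (a - b * P + d * pc) - (P - c) * (a - b * P + d * P)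
        = (P - c) * d * (pc - P) := by ring
    rw [heq]
    positivity
  have hden2 : (P - c) * d ≠ 0 := by positivity
  rw [div_eq_iff hden]
  field_simp
  ring
end

section
/- In the linear Bertrand duopoly, the grim-trigger patience threshold δ̄(p^c) = (π(p*,p^c) - π(p^c,p^c))/(π(p*,p^c) - π(p*,p*)) is strictly increasing in the collusive price p^c on the interval (p*, p^M]. -/
/-- The grim-trigger patience threshold
`δ̄(p^c) = (π(p*,p^c) - π(p^c,p^c)) / (π(p*,p^c) - π(p*,p*))`
is strictly increasing in `p^c` on `(p*, p^M]`. -/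
theorem threshold_strict_mono (a b c d p1 p2 : ℝ)
    (ha : a > c * (b - d)) (hc : c < a / b) (hbd : b > d) (hd : d > 0) (hc0 : c > 0)
    (hp1 : (a + b * c) / (2 * b - d) < p1) (h12 : p1 < p2)
    (hp2 : p2 ≤ (a + (b - d) * c) / (2 * (b - d))) :
    ((((a + b * c) / (2 * b - d)) - c) * (a - b * ((a + b * c) / (2 * b - d)) + d * p1) -
        (p1 - c) * (a - b * p1 + d * p1)) /
      ((((a + b * c) / (2 * b - d)) - c) * (a - b * ((a + b * c) / (2 * b - d)) + d * p1) -
        (((a + b * c) / (2 * b - d)) - c) *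
          (a - b * ((a + b * c) / (2 * b - d)) + d * ((a + b * c) / (2 * b - d)))) <
    ((((a + b * c) / (2 * b - d)) - c) * (a - b * ((a + b * c) / (2 * b - d)) + d * p2) -
        (p2 - c) * (a - b * p2 + d * p2)) /
      ((((a + b * c) / (2 * b - d)) - c) * (a - b * ((a + b * c) / (2 * b - d)) + d * p2) -
        (((a + b * c) / (2 * b - d)) - c) *
          (a - b * ((a + b * c) / (2 * b - d)) + d * ((a + b * c) / (2 * b - d)))) := by
  set s : ℝ := (a + b * c) / (2 * b - d) with hsdef
  have h2bd : (0:ℝ) < 2 * b - d := by linarith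
  have hs : s * (2 * b - d) = a + b * c := by
    rw [hsdef]; exact div_mul_cancel₀ _ h2bd.ne'
  have hK : s - c > 0 := by nlinarith
  have hs1 : s < p1 := hp1
  have hD1 : (s - c) * (a - b * s + d * p1) - (s - c) * (a - b * s + d * s)
      = (s - c) * d * (p1 - s) := by ring
  have hD2 : (s - c) * (a - b * s + d * p2) - (s - c) * (a - b * s + d * s)
      = (s - c) * d * (p2 - s) := by ring
  have hD1pos : (0:ℝ) < (s - c) * (a - b * s + d * p1) - (s - c) * (a - b * s + d * s) := by
    rw [hD1]; exact mul_pos (mul_pos hK hd) (sub_pos.mpr hs1)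
  have hD2pos : (0:ℝ) < (s - c) * (a - b * s + d * p2) - (s - c) * (a - b * s + d * s) := by
    rw [hD2]; exact mul_pos (mul_pos hK hd) (sub_pos.mpr (lt_trans hs1 h12))
  rw [div_lt_div_iff₀ hD1pos hD2pos]
  nlinarith [mul_pos (mul_pos hK hd) (mul_pos (mul_pos (sub_pos.mpr hs1)
      (sub_pos.mpr (lt_trans hs1 h12))) (sub_pos.mpr h12)), sub_pos.mpr hbd]
end
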